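/- Let R be a complete local ring with maximal ideal m and let A be a commutative Frobenius algebra over R (with counit μ : A → R) that is free as an R-module. If A/mA is a semisimple Frobenius algebra over R/m, then A is semisimple over R; that is, A is isomorphic as a Frobenius algebra to a direct sum R_{λ₁} ⊕ ⋯ ⊕ R_{λₙ} for some invertible λᵢ ∈ R. -/

import Mathlib

open TensorProduct

section Aux
variable {R : Type*} [CommRing R] {M : Type*} [AddCommGroup M] [Module R M]

lemma aux_smul_top_R (I : Ideal R) : (I • ⊤ : Submodule R R) = I := by
  rw [smul_eq_mul, Ideal.mul_top]

lemma aux_mem_smul_top_iff_repr {ι : Type*} (b : Module.Basis ι R M) (I : Ideal R) (x : M) :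
    x ∈ I • (⊤ : Submodule R M) ↔ ∀ i, b.repr x i ∈ I := by
  constructor
  · intro hx i
    have h1 : b.coord i x ∈ (I • (⊤ : Submodule R M)).map (b.coord i) :=
      Submodule.mem_map_of_mem hx
    rw [Submodule.map_smul''] at h1
    have h2 : I • ((⊤ : Submodule R M).map (b.coord i)) ≤ I • (⊤ : Submodule R R) :=
      smul_mono_right I le_top
    rw [aux_smul_top_R] at h2
    exact h2 h1
  · intro h
    rw [← b.linearCombination_repr x, Finsupp.linearCombination_apply, Finsupp.sum]
    exact Submodule.sum_mem _ fun i _ => Submodule.smul_mem_smul (h i) trivial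

variable {A : Type*} [CommRing A] [Algebra R A]

lemma aux_mul_mem_smul_top (I : Ideal R) {x : A} (y : A)
    (hx : x ∈ I • (⊤ : Submodule R A)) : y * x ∈ I • (⊤ : Submodule R A) := by
  have h1 : (LinearMap.mulLeft R y) x ∈ (I • (⊤ : Submodule R A)).map (LinearMap.mulLeft R y) :=
    Submodule.mem_map_of_mem hx
  rw [Submodule.map_smul''] at h1
  have h2 : I • ((⊤ : Submodule R A).map (LinearMap.mulLeft R y)) ≤ I • (⊤ : Submodule R A) :=
    smul_mono_right I le_top
  exact h2 h1

lemma aux_mul_mem_smul_smul (I J : Ideal R) {x y : A}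
    (hx : x ∈ I • (⊤ : Submodule R A)) (hy : y ∈ J • (⊤ : Submodule R A)) :
    x * y ∈ (I * J) • (⊤ : Submodule R A) := by
  refine Submodule.smul_induction_on hx ?_ ?_
  · intro r hr a _
    have h : a * y ∈ J • (⊤ : Submodule R A) := aux_mul_mem_smul_top J a hy
    have h2 := Submodule.smul_mem_smul (M := A) hr h
    rw [← Submodule.smul_assoc, smul_eq_mul] at h2
    rw [smul_mul_assoc]
    exact h2
  · intro a b ha hb
    rw [add_mul]; exact add_mem ha hb

lemma aux_mul_mem_pow_smul (I : Ideal R) {s t : ℕ} {x y : A}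
    (hx : x ∈ I ^ s • (⊤ : Submodule R A)) (hy : y ∈ I ^ t • (⊤ : Submodule R A)) :
    x * y ∈ I ^ (s + t) • (⊤ : Submodule R A) := by
  rw [pow_add]
  exact aux_mul_mem_smul_smul _ _ hx hy

end Aux

theorem frobenius_semisimple_of_residue_semisimple
    {R A : Type*} [CommRing R] [IsLocalRing R]
    [IsAdicComplete (IsLocalRing.maximalIdeal R) R]
    [CommRing A] [Algebra R A] [Module.Free R A]
    (Δ : A →ₗ[R] A ⊗[R] A) (μ : A →ₗ[R] R)
    (hcounitR : ∀ a : A, (TensorProduct.rid R A) (TensorProduct.map LinearMap.id μ (Δ a)) = a)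
    (hcounitL : ∀ a : A, (TensorProduct.lid R A) (TensorProduct.map μ LinearMap.id (Δ a)) = a)
    (hfrob : ∀ a b : A, Δ (a * b) = TensorProduct.map (LinearMap.mul' R A) LinearMap.id
      ((TensorProduct.assoc R A A A).symm (a ⊗ₜ[R] Δ b)))
    {n : ℕ} (e : Fin n → A)
    (hid : ∀ i, e i * e i - e i ∈ (IsLocalRing.maximalIdeal R) • (⊤ : Submodule R A))
    (horth : ∀ i j, i ≠ j → e i * e j ∈ (IsLocalRing.maximalIdeal R) • (⊤ : Submodule R A))
    (hbasis : ∃ bq : Module.Basis (Fin n) (R ⧸ IsLocalRing.maximalIdeal R)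
        (A ⧸ ((IsLocalRing.maximalIdeal R) • (⊤ : Submodule R A))),
      ∀ i, bq i = Submodule.Quotient.mk (e i))
    (hμunit : ∀ i, μ (e i) ∉ IsLocalRing.maximalIdeal R) :
    ∃ v : Fin n → A,
      (∃ bA : Module.Basis (Fin n) R A, ∀ i, bA i = v i) ∧
      (∀ i, v i * v i = v i) ∧
      (∀ i j, i ≠ j → v i * v j = 0) ∧
      (∀ i, IsUnit (μ (v i))) := by
  classical
  set I := IsLocalRing.maximalIdeal R with hIdef
  obtain ⟨bq, hbq⟩ := hbasis
  letI : Field (R ⧸ I) := Ideal.Quotient.field I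
  let b0 := Module.Free.chooseBasis R A
  set ι := Module.Free.ChooseBasisIndex R A with hιdef
  set mkq : A →ₗ[R] A ⧸ (I • (⊤ : Submodule R A)) := Submodule.mkQ (I • ⊤) with hmkq
  -- residues of the basis `b0` are linearly independent over the residue field
  have hli : LinearIndependent (R ⧸ I) (fun i : ι => mkq (b0 i)) := by
    rw [linearIndependent_iff']
    intro s g hg i hi
    choose c hc using fun j => Ideal.Quotient.mk_surjective (I := I) (g j)
    have hmem : (∑ j ∈ s, c j • b0 j) ∈ I • (⊤ : Submodule R A) := by
      rw [← Submodule.Quotient.mk_eq_zero]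
      have hsum : Submodule.Quotient.mk (p := I • (⊤ : Submodule R A)) (∑ j ∈ s, c j • b0 j)
          = ∑ j ∈ s, g j • mkq (b0 j) := by
        rw [← Submodule.mkQ_apply, map_sum]
        refine Finset.sum_congr rfl fun j _ => ?_
        rw [← hc j]
        rfl
      rw [hsum, hg]
    have hco := (aux_mem_smul_top_iff_repr b0 I _).mp hmem i
    have hrepr : b0.repr (∑ j ∈ s, c j • b0 j) i = c i := by
      rw [map_sum]
      simp only [map_smul, Module.Basis.repr_self]
      rw [Finsupp.coe_finset_sum, Finset.sum_apply]
      simp only [Finsupp.smul_single, smul_eq_mul, mul_one]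
      rw [Finset.sum_eq_single i (fun j _ hj => Finsupp.single_eq_of_ne hj.symm)
        (fun h => absurd hi h)]
      simp
    rw [hrepr] at hco
    rw [← hc i, Ideal.Quotient.eq_zero_iff_mem]
    exact hco
  haveI : Module.Finite (R ⧸ I) (A ⧸ I • (⊤ : Submodule R A)) := Module.Finite.of_basis bq
  haveI : Finite ι := hli.finite
  haveI : Fintype ι := Fintype.ofFinite ι
  haveI : Module.Finite R A := Module.Finite.of_basis b0
  -- residues of `b0` span the quotient over the residue field
  have hspanR : Submodule.span R (Set.range fun i : ι => mkq (b0 i)) = ⊤ := by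
    have : Set.range (fun i : ι => mkq (b0 i)) = mkq '' (Set.range b0) := by
      rw [← Set.range_comp]; rfl
    rw [this, ← Submodule.map_span, b0.span_eq, Submodule.map_top, Submodule.range_mkQ]
  have hspan0 : Submodule.span (R ⧸ I) (Set.range fun i : ι => mkq (b0 i)) = ⊤ := by
    rw [← Submodule.restrictScalars_eq_top_iff (S := R),
      Submodule.restrictScalars_span R (R ⧸ I) Ideal.Quotient.mk_surjective]
    exact hspanR
  let bk : Module.Basis ι (R ⧸ I) (A ⧸ I • (⊤ : Submodule R A)) := Module.Basis.mk hli hspan0.ge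
  let eqι : ι ≃ Fin n := bk.indexEquiv bq
  -- Hausdorff property of A
  have hausA : ∀ x : A, (∀ s : ℕ, x ∈ (I ^ s • ⊤ : Submodule R A)) → x = 0 := by
    intro x hx
    refine b0.ext_elem fun i => ?_
    have h0 : b0.repr x i = 0 := by
      refine IsHausdorff.haus (IsAdicComplete.toIsHausdorff (I := I) (M := R)) _ fun s => ?_
      rw [SModEq.sub_mem, sub_zero, aux_smul_top_R]
      exact (aux_mem_smul_top_iff_repr b0 _ _).mp (hx s) i
    simp [h0]
  -- precompleteness of A
  have precA : ∀ f : ℕ → A, (∀ m nn : ℕ, m ≤ nn → f nn - f m ∈ (I ^ m • ⊤ : Submodule R A)) →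
      ∃ L : A, ∀ s, L - f s ∈ (I ^ s • ⊤ : Submodule R A) := by
    intro f hf
    have hcau : ∀ i : ι, ∀ {m nn : ℕ}, m ≤ nn →
        b0.repr (f m) i ≡ b0.repr (f nn) i [SMOD (I ^ m • ⊤ : Submodule R R)] := by
      intro i m nn h
      rw [SModEq.sub_mem, aux_smul_top_R]
      have := (aux_mem_smul_top_iff_repr b0 (I ^ m) _).mp (hf m nn h) i
      rw [map_sub, Finsupp.sub_apply] at this
      simpa using neg_mem this
    choose L hL using fun i : ι =>
      IsPrecomplete.prec (IsAdicComplete.toIsPrecomplete (I := I) (M := R)) (hcau i)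
    refine ⟨b0.equivFun.symm L, fun s => ?_⟩
    rw [aux_mem_smul_top_iff_repr b0]
    intro i
    have hrepr : b0.repr (b0.equivFun.symm L) i = L i := by
      rw [← Module.Basis.equivFun_apply, LinearEquiv.apply_symm_apply]
    have h := hL i s
    rw [SModEq.sub_mem, aux_smul_top_R] at h
    rw [map_sub, Finsupp.sub_apply, hrepr]
    simpa using neg_mem h
  have hJle : ∀ {s t : ℕ}, s ≤ t →
      (I ^ t • ⊤ : Submodule R A) ≤ (I ^ s • ⊤ : Submodule R A) :=
    fun h => Submodule.smul_mono_left (Ideal.pow_le_pow_right h)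
  -- Newton iteration: lift each idempotent
  have key : ∀ i : Fin n, ∃ v : A, v * v = v ∧ v - e i ∈ (I • ⊤ : Submodule R A) := by
    intro i
    set g : A → A := fun x => 3 * x ^ 2 - 2 * x ^ 3 with hg
    set sq : ℕ → A := fun s => g^[s] (e i) with hsq
    have hsq0 : sq 0 = e i := rfl
    have hsqsucc : ∀ s, sq (s + 1) = g (sq s) := fun s => Function.iterate_succ_apply' g s (e i)
    have P1 : ∀ s, sq s * sq s - sq s ∈ (I ^ (s + 1) • ⊤ : Submodule R A) := by
      intro s
      induction s with
      | zero => rw [hsq0, pow_one]; exact hid i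
      | succ s ih =>
        have hident : sq (s + 1) * sq (s + 1) - sq (s + 1) =
            (4 * (sq s) ^ 2 - 4 * sq s - 3) * ((sq s * sq s - sq s) * (sq s * sq s - sq s)) := by
          rw [hsqsucc s]; simp only [hg]; ring
        rw [hident]
        have h2 : (sq s * sq s - sq s) * (sq s * sq s - sq s) ∈
            (I ^ ((s + 1) + (s + 1)) • ⊤ : Submodule R A) := aux_mul_mem_pow_smul _ ih ih
        exact hJle (by omega) (aux_mul_mem_smul_top _ _ h2)
    have P2 : ∀ s, sq (s + 1) - sq s ∈ (I ^ (s + 1) • ⊤ : Submodule R A) := by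
      intro s
      have hident : sq (s + 1) - sq s = (1 - 2 * sq s) * (sq s * sq s - sq s) := by
        rw [hsqsucc s]; simp only [hg]; ring
      rw [hident]
      exact aux_mul_mem_smul_top _ _ (P1 s)
    have htel : ∀ m nn : ℕ, m ≤ nn → sq nn - sq m ∈ (I ^ m • ⊤ : Submodule R A) := by
      intro m nn h
      induction nn, h using Nat.le_induction with
      | base => rw [sub_self]; exact zero_mem _
      | succ nn h ih =>
        have : sq (nn + 1) - sq m = (sq (nn + 1) - sq nn) + (sq nn - sq m) := by ring
        rw [this]
        exact add_mem (hJle (by omega) (P2 nn)) ih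
    obtain ⟨L, hL⟩ := precA sq htel
    refine ⟨L, ?_, ?_⟩
    · refine sub_eq_zero.mp (hausA _ fun s => ?_)
      have hx := hL s
      have hxx := hJle s.le_succ (P1 s)
      have hident : L * L - L =
          (L + sq s) * (L - sq s) - (L - sq s) + (sq s * sq s - sq s) := by ring
      rw [hident]
      exact add_mem (sub_mem (aux_mul_mem_smul_top _ _ hx) hx) hxx
    · have h1 := hL 0
      rw [pow_zero] at h1
      -- need L - e i ∈ I • ⊤ : use hL 1 and P2 0
      have h2 := hL 1
      rw [pow_one] at h2
      have h3 : sq 1 - e i ∈ (I • ⊤ : Submodule R A) := by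
        have := P2 0
        rw [pow_one] at this
        rwa [hsq0] at this
      have : L - e i = (L - sq 1) + (sq 1 - e i) := by ring
      rw [this]
      exact add_mem h2 h3
  choose v hv1 hv2 using key
  -- orthogonality
  have horthv : ∀ i j, i ≠ j → v i * v j = 0 := by
    intro i j hij
    have hp : v i * v j ∈ (I • ⊤ : Submodule R A) := by
      have hident : v i * v j =
          (v j) * (v i - e i) + (e i) * (v j - e j) + e i * e j := by ring
      rw [hident]
      exact add_mem (add_mem (aux_mul_mem_smul_top _ _ (hv2 i))
        (aux_mul_mem_smul_top _ _ (hv2 j))) (horth i j hij)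
    have hidem : (v i * v j) * (v i * v j) = v i * v j := by
      have : (v i * v j) * (v i * v j) = (v i * v i) * (v j * v j) := by ring
      rw [this, hv1 i, hv1 j]
    have hpow : ∀ s : ℕ, v i * v j ∈ (I ^ s • ⊤ : Submodule R A) := by
      intro s
      induction s with
      | zero => rw [pow_zero, Ideal.one_eq_top, Submodule.top_smul]; trivial
      | succ s ih =>
        have h1 : v i * v j ∈ (I ^ 1 • ⊤ : Submodule R A) := by rwa [pow_one]
        have := aux_mul_mem_pow_smul (I := I) ih h1
        rwa [hidem] at this
    exact hausA _ hpow
  -- counit units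
  have hμv : ∀ i, IsUnit (μ (v i)) := by
    intro i
    have hmem : μ (v i) - μ (e i) ∈ I := by
      have h := hv2 i
      have h1 : μ (v i - e i) ∈ (I • (⊤ : Submodule R A)).map μ := Submodule.mem_map_of_mem h
      rw [Submodule.map_smul''] at h1
      have h2 : I • ((⊤ : Submodule R A).map μ) ≤ I • (⊤ : Submodule R R) :=
        smul_mono_right I le_top
      rw [aux_smul_top_R] at h2
      rw [map_sub] at h1
      exact h2 h1
    by_contra hne
    have hv' : μ (v i) ∈ I := by
      rw [hIdef, IsLocalRing.mem_maximalIdeal, mem_nonunits_iff]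
      exact hne
    have : μ (e i) ∈ I := by
      have := sub_mem hv' hmem
      simpa using this
    exact hμunit i this
  -- the lifts span
  have hspanv : Submodule.span R (Set.range v) = ⊤ := by
    rw [← IsLocalRing.map_mkQ_eq_top (N := Submodule.span R (Set.range v))]
    rw [Submodule.map_span]
    have himg : (Submodule.mkQ (I • ⊤ : Submodule R A)) '' Set.range v = Set.range bq := by
      rw [← Set.range_comp]
      refine congrArg _ (funext fun i => ?_)
      show mkq (v i) = bq i
      rw [hbq i, hmkq, Submodule.mkQ_apply]
      exact (Submodule.Quotient.eq _).mpr (by simpa using hv2 i)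
    rw [himg, ← Submodule.restrictScalars_span R (R ⧸ I) Ideal.Quotient.mk_surjective,
      bq.span_eq]
    rfl
  -- build the basis
  let f : (Fin n → R) →ₗ[R] A := Fintype.linearCombination R v
  have hfsurj : Function.Surjective f := by
    rw [← LinearMap.range_eq_top, Fintype.range_linearCombination]
    exact hspanv
  let E : (Fin n → R) ≃ₗ[R] A :=
    (LinearEquiv.funCongrLeft R R eqι).trans b0.equivFun.symm
  have hfinj : Function.Injective f :=
    OrzechProperty.injective_of_surjective_of_injective E.toLinearMap f E.injective hfsurj
  let G : (Fin n → R) ≃ₗ[R] A := LinearEquiv.ofBijective f ⟨hfinj, hfsurj⟩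
  refine ⟨v, ⟨(Pi.basisFun R (Fin n)).map G, fun i => ?_⟩, hv1, horthv, hμv⟩
  rw [Module.Basis.map_apply, Pi.basisFun_apply]
  show f (Pi.single i 1) = v i
  simp [f, Fintype.linearCombination_apply, Pi.single_apply]
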